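/- Let ψ ∈ Ω∞, let κ ∈ 𝒦 have dominated growth with respect to ψ (κ ∈ D(ψ)), and let x ∈ M₊(ψ). Then the following statements are equivalent: (i) φ_κ(x) is Cesàro convergent, i.e. lim_{t→∞} (1/t)∫₀^t φ_κ(x)(s) ds exists; (ii) f_{L,κ}(x) is independent of the Banach limit L ∈ BL(ℝ₊); (iii) lim_{t→∞} φ(x)(t) exists and f_{L,κ}(x) = lim_{t→∞} φ(x)(t) for every L ∈ BL(ℝ₊). In particular, for κ ∈ D(ψ) a positive element x of M(ψ) is κ-measurable if and only if it is Tauberian, i.e. if and only if lim_{t→∞} (1/ψ(t))∫₀^t x*(s) ds exists. -/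

import Mathlib

open MeasureTheory Filter Set

noncomputable section

/-- `f` is bounded and continuous on `[0,∞)`, i.e. (the restriction of) `f`
belongs to `C_b([0,∞))`. -/
def IsCb (f : ℝ → ℝ) : Prop :=
  ContinuousOn f (Ici 0) ∧ ∃ M : ℝ, ∀ t ∈ Ici (0:ℝ), |f t| ≤ M

/-- Bounded real sequences, i.e. elements of `ℓ∞(ℕ)`. -/
def IsBddSeq (a : ℕ → ℝ) : Prop := ∃ M : ℝ, ∀ n, |a n| ≤ M

/-- A Banach limit on `C_b([0,∞))`: a positive linear translation-invariant
functional with `L(1) = 1`.  (The underlying map is defined on all of `ℝ → ℝ`;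
the axioms only refer to its values on bounded continuous functions on `[0,∞)`.) -/
structure BanachLimitR where
  toFun : (ℝ → ℝ) → ℝ
  map_add : ∀ f g : ℝ → ℝ, IsCb f → IsCb g →
    toFun (fun t => f t + g t) = toFun f + toFun g
  map_smul : ∀ (c : ℝ) (f : ℝ → ℝ), IsCb f → toFun (fun t => c * f t) = c * toFun f
  pos : ∀ f : ℝ → ℝ, IsCb f → (∀ t ∈ Ici (0:ℝ), 0 ≤ f t) → 0 ≤ toFun f
  map_one : toFun (fun _ => 1) = 1
  shift_inv : ∀ f : ℝ → ℝ, IsCb f → ∀ s : ℝ, 0 ≤ s → toFun (fun t => f (t + s)) = toFun f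

/-- A Banach limit on `ℓ∞(ℕ)`: a positive linear shift-invariant functional
with `L'(1) = 1`. -/
structure BanachLimitN where
  toFun : (ℕ → ℝ) → ℝ
  map_add : ∀ a b : ℕ → ℝ, IsBddSeq a → IsBddSeq b →
    toFun (fun n => a n + b n) = toFun a + toFun b
  map_smul : ∀ (c : ℝ) (a : ℕ → ℝ), IsBddSeq a → toFun (fun n => c * a n) = c * toFun a
  pos : ∀ a : ℕ → ℝ, IsBddSeq a → (∀ n, 0 ≤ a n) → 0 ≤ toFun a
  map_one : toFun (fun _ => 1) = 1
  shift_inv : ∀ a : ℕ → ℝ, IsBddSeq a → toFun (fun n => a (n + 1)) = toFun a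

/-- An element of `SC_b^*([0,∞))`: a positive linear functional on `C_b([0,∞))`
with `γ(1) = 1` vanishing on `C₀([0,∞))`. -/
structure SCbStar where
  toFun : (ℝ → ℝ) → ℝ
  map_add : ∀ f g : ℝ → ℝ, IsCb f → IsCb g →
    toFun (fun t => f t + g t) = toFun f + toFun g
  map_smul : ∀ (c : ℝ) (f : ℝ → ℝ), IsCb f → toFun (fun t => c * f t) = c * toFun f
  pos : ∀ f : ℝ → ℝ, IsCb f → (∀ t ∈ Ici (0:ℝ), 0 ≤ f t) → 0 ≤ toFun f
  map_one : toFun (fun _ => 1) = 1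
  vanish : ∀ f : ℝ → ℝ, IsCb f → Tendsto f atTop (nhds 0) → toFun f = 0

/-- A positive linear functional on `C_b([0,∞))`. -/
structure PosLinFunc where
  toFun : (ℝ → ℝ) → ℝ
  map_add : ∀ f g : ℝ → ℝ, IsCb f → IsCb g →
    toFun (fun t => f t + g t) = toFun f + toFun g
  map_smul : ∀ (c : ℝ) (f : ℝ → ℝ), IsCb f → toFun (fun t => c * f t) = c * toFun f
  pos : ∀ f : ℝ → ℝ, IsCb f → (∀ t ∈ Ici (0:ℝ), 0 ≤ f t) → 0 ≤ toFun f

/-- `ψ ∈ Ω_∞`: concave on `[0,∞)`, nonnegative, `ψ(t) → 0` as `t → 0⁺` and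
`ψ(t) → ∞` as `t → ∞`. -/
def OmegaInf (ψ : ℝ → ℝ) : Prop :=
  ConcaveOn ℝ (Ici 0) ψ ∧ (∀ t ∈ Ici (0:ℝ), 0 ≤ ψ t) ∧
    Tendsto ψ (nhdsWithin 0 (Ioi 0)) (nhds 0) ∧ Tendsto ψ atTop atTop

/-- The decreasing rearrangement `x*` of a measurable function `x` on `[0,∞)`. -/
def decRearr (x : ℝ → ℝ) (t : ℝ) : ℝ :=
  sInf {s : ℝ | 0 ≤ s ∧ volume {u : ℝ | 0 ≤ u ∧ s < |x u|} ≤ ENNReal.ofReal t}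

/-- The weighted mean function `φ(x)(t) = (1/ψ(t)) ∫₀ᵗ x*(s) ds`. -/
def phiW (ψ x : ℝ → ℝ) (t : ℝ) : ℝ := (∫ s in (0:ℝ)..t, decRearr x s) / ψ t

/-- Membership in the Marcinkiewicz space `M(ψ)`. -/
def MemM (ψ x : ℝ → ℝ) : Prop :=
  Measurable x ∧ ∃ M : ℝ, ∀ t > (0:ℝ), phiW ψ x t ≤ M

/-- Membership in the positive cone `M₊(ψ)`. -/
def MemMplus (ψ x : ℝ → ℝ) : Prop := MemM ψ x ∧ ∀ t ∈ Ici (0:ℝ), 0 ≤ x t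

/-- The Marcinkiewicz norm `‖x‖_{M(ψ)} = sup_{t>0} φ(x)(t)`. -/
def MNorm (ψ x : ℝ → ℝ) : ℝ := ⨆ t > (0:ℝ), phiW ψ x t

/-- `κ ∈ 𝒦`: strictly increasing, invertible (as a map of `[0,∞)` onto itself),
differentiable, unbounded, with `κ(0) = 0`. -/
def MemK (κ : ℝ → ℝ) : Prop :=
  StrictMonoOn κ (Ici 0) ∧ κ 0 = 0 ∧ MapsTo κ (Ici 0) (Ici 0) ∧
    SurjOn κ (Ici 0) (Ici 0) ∧ DifferentiableOn ℝ κ (Ici 0) ∧ Tendsto κ atTop atTop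

/-- `f_{L,κ}(x) = L(φ_κ(x))` for a Banach limit `L` on `C_b([0,∞))`; the function
`φ_κ(x)`, bounded and continuous on `(0,∞)`, is fed to `L` as `t ↦ φ_κ(x)(max t 1)`. -/
def fL (L : BanachLimitR) (ψ κ x : ℝ → ℝ) : ℝ :=
  L.toFun fun t => phiW ψ x (κ (max t 1))

/-- `f_{L',κ}(x) = L'({φ(x)(κ(n))}ₙ)` for a Banach limit `L'` on `ℓ∞(ℕ)`. -/
def fLN (L' : BanachLimitN) (ψ κ x : ℝ → ℝ) : ℝ :=
  L'.toFun fun n => phiW ψ x (κ n)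

/-- `κ` has restricted growth with respect to `ψ` (`κ ∈ R(ψ)`): the sequence
`ψ(κ(n))/ψ(κ(n+1))` is almost convergent to `1`. -/
def RestrictedGrowth (ψ κ : ℝ → ℝ) : Prop :=
  ∀ L' : BanachLimitN, L'.toFun (fun n => ψ (κ n) / ψ (κ ((n:ℝ) + 1))) = 1

/-- `κ` has dominated growth with respect to `ψ` (`κ ∈ D(ψ)`):
`(ψ∘κ)'(t)/(ψ∘κ)(t) < C/t` for some `C > 0` and all `t > 0`. -/
def DominatedGrowth (ψ κ : ℝ → ℝ) : Prop :=
  (∀ t > (0:ℝ), DifferentiableAt ℝ (fun u => ψ (κ u)) t) ∧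
    ∃ C > (0:ℝ), ∀ t > (0:ℝ), deriv (fun u => ψ (κ u)) t / ψ (κ t) < C / t

/-- `κ` is of exponential increase: `κ(t + C) > 2κ(t)` for some `C > 0` and all `t > 0`. -/
def ExpIncrease (κ : ℝ → ℝ) : Prop := ∃ C > (0:ℝ), ∀ t > (0:ℝ), 2 * κ t < κ (t + C)

/-- The piecewise linear extension map `p : ℓ∞(ℕ) → C_b([0,∞))`. -/
def plExt (a : ℕ → ℝ) (t : ℝ) : ℝ :=
  a ⌊t⌋₊ + (a (⌊t⌋₊ + 1) - a ⌊t⌋₊) * (t - (⌊t⌋₊ : ℝ))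

/-- The Cesàro mean `C(g)(μ) = (1/μ) ∫₀^μ g(s) ds` (with `C(g)(0) := g(0)`). -/
def cesaro (g : ℝ → ℝ) (μ : ℝ) : ℝ :=
  if μ = 0 then g 0 else (∫ s in (0:ℝ)..μ, g s) / μ

/-- `M_k(g)(λ) = (1/k(λ)) ∫₀^λ g(s) k'(s) ds` (with `M_k(g)(0) := g(0)`). -/
def MkFun (k g : ℝ → ℝ) (l : ℝ) : ℝ :=
  if l = 0 then g 0 else (∫ s in (0:ℝ)..l, g s * deriv k s) / k l

/-- The Connes-Dixmier functional `τ_{γ,k}(x) = γ(M_k(φ(x)))`; the function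
`M_k(φ(x))`, bounded and continuous on `(0,∞)`, is fed to `γ` as `t ↦ M_k(φ(x))(max t 1)`. -/
def tauCD (γ : SCbStar) (ψ k x : ℝ → ℝ) : ℝ :=
  γ.toFun fun t => MkFun k (phiW ψ x) (max t 1)

/-- A set `Λ` of Banach limits has the Cesàro limit property if for each
`g ∈ C_b([0,∞))` both `liminf C(g)` and `limsup C(g)` are attained as values `L(g)`, `L ∈ Λ`. -/
def CesaroLimitProp (Λ : Set BanachLimitR) : Prop :=
  ∀ g : ℝ → ℝ, IsCb g →
    (∃ L ∈ Λ, L.toFun g = liminf (cesaro g) atTop) ∧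
    (∃ L ∈ Λ, L.toFun g = limsup (cesaro g) atTop)

/-- Dilation invariance of an element of `SC_b^*([0,∞))`. -/
def DilationInvariant (ω : SCbStar) : Prop :=
  ∀ g : ℝ → ℝ, IsCb g → ∀ a : ℝ, 0 < a → ω.toFun (fun t => g (a * t)) = ω.toFun g

section AuxKMT


lemma isCb_const (c : ℝ) : IsCb (fun _ => c) :=
  ⟨continuousOn_const, ⟨|c|, fun _ _ => le_rfl⟩⟩

lemma IsCb.add {f g : ℝ → ℝ} (hf : IsCb f) (hg : IsCb g) : IsCb (fun t => f t + g t) := by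
  obtain ⟨Mf, hMf⟩ := hf.2; obtain ⟨Mg, hMg⟩ := hg.2
  exact ⟨hf.1.add hg.1, ⟨Mf + Mg, fun t ht =>
    (abs_add_le _ _).trans (add_le_add (hMf t ht) (hMg t ht))⟩⟩

lemma IsCb.constMul {f : ℝ → ℝ} (hf : IsCb f) (c : ℝ) : IsCb (fun t => c * f t) := by
  obtain ⟨Mf, hMf⟩ := hf.2
  refine ⟨hf.1.const_smul c, ⟨|c| * Mf, fun t ht => ?_⟩⟩
  rw [abs_mul]
  exact mul_le_mul_of_nonneg_left (hMf t ht) (abs_nonneg c)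

lemma IsCb.shift {f : ℝ → ℝ} (hf : IsCb f) {s : ℝ} (hs : 0 ≤ s) :
    IsCb (fun t => f (t + s)) := by
  obtain ⟨Mf, hMf⟩ := hf.2
  refine ⟨hf.1.comp ((continuous_id.add continuous_const).continuousOn)
    (fun t ht => by simp only [mem_Ici] at ht ⊢; linarith), ⟨Mf, fun t ht => hMf _ (by
      simp only [mem_Ici] at ht ⊢; linarith)⟩⟩

lemma IsCb.nonnegBound {f : ℝ → ℝ} (hf : IsCb f) :
    ∃ M : ℝ, 0 ≤ M ∧ ∀ t ∈ Ici (0:ℝ), |f t| ≤ M := by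
  obtain ⟨M, hM⟩ := hf.2
  exact ⟨M, le_trans (abs_nonneg _) (hM 0 Set.self_mem_Ici), hM⟩

lemma IsCb.intervalIntegrable {f : ℝ → ℝ} (hf : IsCb f) {a b : ℝ} (ha : 0 ≤ a) (hb : 0 ≤ b) :
    IntervalIntegrable f volume a b := by
  apply ContinuousOn.intervalIntegrable
  apply hf.1.mono
  rcases le_total a b with h | h
  · rw [uIcc_of_le h]; exact fun t ht => le_trans ha ht.1
  · rw [uIcc_of_ge h]; exact fun t ht => le_trans hb ht.1

lemma cesaro_bound {f : ℝ → ℝ} {M : ℝ} (hM : ∀ t ∈ Ici (0:ℝ), |f t| ≤ M) :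
    ∀ μ > (0:ℝ), |cesaro f μ| ≤ M := by
  intro μ hμ
  rw [cesaro, if_neg (ne_of_gt hμ), abs_div, abs_of_pos hμ, div_le_iff₀ hμ]
  have h := intervalIntegral.norm_integral_le_of_norm_le_const (a := 0) (b := μ) (C := M)
    (f := f) (fun t ht => by
      rw [uIoc_of_le hμ.le] at ht
      exact hM t (le_of_lt ht.1))
  rw [Real.norm_eq_abs] at h
  calc |∫ s in (0:ℝ)..μ, f s| ≤ M * |μ - 0| := h
    _ = M * μ := by rw [sub_zero, abs_of_pos hμ]

lemma bddAbove_of_abs {u : ℝ → ℝ} {M : ℝ} (h : ∀ μ > (0:ℝ), |u μ| ≤ M) :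
    IsBoundedUnder (· ≤ ·) atTop u :=
  ⟨M, eventually_atTop.2 ⟨1, fun μ hμ => (abs_le.1 (h μ (by linarith))).2⟩⟩

lemma bddBelow_of_abs {u : ℝ → ℝ} {M : ℝ} (h : ∀ μ > (0:ℝ), |u μ| ≤ M) :
    IsBoundedUnder (· ≥ ·) atTop u :=
  ⟨-M, eventually_atTop.2 ⟨1, fun μ hμ => (abs_le.1 (h μ (by linarith))).1⟩⟩

lemma cesaro_const (c : ℝ) : cesaro (fun _ => c) = fun _ => c := by
  funext μ
  rcases eq_or_ne μ 0 with h | h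
  · simp [cesaro, h]
  · rw [cesaro, if_neg h, intervalIntegral.integral_const, sub_zero, smul_eq_mul,
      mul_comm, mul_div_assoc, div_self h, mul_one]

lemma cesaro_add {f g : ℝ → ℝ} (hf : IsCb f) (hg : IsCb g) {μ : ℝ} (hμ : 0 < μ) :
    cesaro (fun t => f t + g t) μ = cesaro f μ + cesaro g μ := by
  rw [cesaro, cesaro, cesaro, if_neg (ne_of_gt hμ), if_neg (ne_of_gt hμ), if_neg (ne_of_gt hμ)]
  rw [intervalIntegral.integral_add (hf.intervalIntegrable le_rfl hμ.le)
    (hg.intervalIntegrable le_rfl hμ.le), add_div]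

lemma cesaro_smul (c : ℝ) (f : ℝ → ℝ) :
    cesaro (fun t => c * f t) = fun μ => c * cesaro f μ := by
  funext μ
  rcases eq_or_ne μ 0 with h | h
  · simp [cesaro, h]
  · simp only [cesaro, if_neg h]
    rw [intervalIntegral.integral_const_mul, mul_div_assoc]

lemma cesaro_neg (f : ℝ → ℝ) : cesaro (fun t => -(f t)) = fun μ => -(cesaro f μ) := by
  have h := cesaro_smul (-1) f
  simp only [neg_one_mul] at h
  rw [h]

lemma limsup_const_mul_pos {u : ℝ → ℝ} {c : ℝ} (hc : 0 < c)
    (h₁ : IsBoundedUnder (· ≤ ·) atTop u) (h₂ : IsBoundedUnder (· ≥ ·) atTop u)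
    (h₃ : IsBoundedUnder (· ≤ ·) atTop (fun t => c * u t))
    (h₄ : IsBoundedUnder (· ≥ ·) atTop (fun t => c * u t)) :
    limsup (fun t => c * u t) atTop = c * limsup u atTop :=
  ((OrderIso.mulLeft₀ c hc).limsup_apply (f := atTop) (u := u)
    h₁ h₂.isCoboundedUnder_le h₃ h₄.isCoboundedUnder_le).symm

lemma c_neg_liminf_le {u : ℝ → ℝ} {c : ℝ} (hc : c < 0)
    (h₁ : IsBoundedUnder (· ≤ ·) atTop u)
    (h₃ : IsBoundedUnder (· ≤ ·) atTop (fun t => c * u t)) :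
    c * liminf u atTop ≤ limsup (fun t => c * u t) atTop := by
  apply le_of_forall_pos_le_add
  intro ε hε
  have hcn : 0 < -c := by linarith
  have hfreq : ∃ᶠ t in atTop, u t < liminf u atTop + ε / (-c) :=
    frequently_lt_of_liminf_lt h₁.isCoboundedUnder_ge (lt_add_of_pos_right _ (by positivity))
  have hfreq2 : ∃ᶠ t in atTop, c * liminf u atTop + -ε ≤ c * u t := by
    refine hfreq.mono fun t ht => ?_
    have h5 : c * (liminf u atTop + ε / -c) ≤ c * u t :=
      (mul_le_mul_left_of_neg hc).2 ht.le
    have h6 : c * (ε / -c) = -ε := by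
      rw [mul_div_assoc', div_neg, mul_comm, mul_div_assoc, div_self hc.ne, mul_one]
    rw [mul_add, h6] at h5
    exact h5
  have h7 := le_limsup_of_frequently_le hfreq2 h₃
  linarith


section BLConstruction

def CbSubmodule : Submodule ℝ (ℝ → ℝ) where
  carrier := {f | IsCb f}
  add_mem' := fun hf hg => hf.add hg
  zero_mem' := isCb_const 0
  smul_mem' := fun c f hf => hf.constMul c

def NNfun (w : CbSubmodule) : ℝ := limsup (cesaro w.1) atTop

lemma cesaro_nonpos_of_nonneg {f : ℝ → ℝ} (hf : IsCb f) (hpos : ∀ t ∈ Ici (0:ℝ), 0 ≤ f t) :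
    ∀ᶠ μ in atTop, -(cesaro f μ) ≤ 0 := by
  filter_upwards [eventually_gt_atTop 0] with μ hμ
  have h : 0 ≤ cesaro f μ := by
    rw [cesaro, if_neg (ne_of_gt hμ)]
    apply div_nonneg _ hμ.le
    apply intervalIntegral.integral_nonneg hμ.le
    exact fun u hu => hpos u hu.1
  linarith

def mkBL (Lhat : CbSubmodule →ₗ[ℝ] ℝ)
    (hle : ∀ w : CbSubmodule, Lhat w ≤ NNfun w) : BanachLimitR where
  toFun f := @dite _ (IsCb f) (Classical.propDecidable _) (fun h => Lhat ⟨f, h⟩) (fun _ => (0:ℝ))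
  map_add f g hf hg := by
    beta_reduce
    rw [dif_pos (hf.add hg), dif_pos hf, dif_pos hg]
    have he : (⟨fun t => f t + g t, hf.add hg⟩ : CbSubmodule) = ⟨f, hf⟩ + ⟨g, hg⟩ := rfl
    rw [he, map_add]
  map_smul c f hf := by
    beta_reduce
    rw [dif_pos (hf.constMul c), dif_pos hf]
    have he : (⟨fun t => c * f t, hf.constMul c⟩ : CbSubmodule) = c • (⟨f, hf⟩ : CbSubmodule) :=
      rfl
    rw [he, LinearMap.map_smul, smul_eq_mul]
  pos f hf hpos := by
    beta_reduce
    rw [dif_pos hf]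
    obtain ⟨Mf, hMf0, hMf⟩ := hf.nonnegBound
    have h1 : Lhat (-(⟨f, hf⟩ : CbSubmodule)) ≤ NNfun (-(⟨f, hf⟩ : CbSubmodule)) := hle _
    have hval : NNfun (-(⟨f, hf⟩ : CbSubmodule)) = limsup (fun μ => -(cesaro f μ)) atTop := by
      have hcoe : (-(⟨f, hf⟩ : CbSubmodule)).1 = fun t => -(f t) := rfl
      rw [NNfun, hcoe, cesaro_neg]
    have hcb : IsCoboundedUnder (· ≤ ·) atTop (fun μ => -(cesaro f μ)) := by
      apply IsBoundedUnder.isCoboundedUnder_le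
      apply bddBelow_of_abs (M := Mf)
      intro μ hμ
      rw [abs_neg]
      exact cesaro_bound hMf μ hμ
    have h2 : limsup (fun μ => -(cesaro f μ)) atTop ≤ 0 :=
      limsup_le_of_le hcb (cesaro_nonpos_of_nonneg hf hpos)
    have h3 : Lhat (-(⟨f, hf⟩ : CbSubmodule)) = -(Lhat ⟨f, hf⟩) := map_neg _ _
    rw [hval] at h1
    linarith
  map_one := by
    beta_reduce
    rw [dif_pos (isCb_const 1)]
    have h1 : Lhat ⟨fun _ => 1, isCb_const 1⟩ ≤ NNfun ⟨fun _ => 1, isCb_const 1⟩ := hle _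
    have e1 : NNfun ⟨fun _ => 1, isCb_const 1⟩ = 1 := by
      rw [NNfun]
      have : ((⟨fun _ => 1, isCb_const 1⟩ : CbSubmodule) : ℝ → ℝ) = fun _ => (1:ℝ) := rfl
      rw [this, cesaro_const, limsup_const]
    have h2 : Lhat (-(⟨fun _ => 1, isCb_const 1⟩ : CbSubmodule)) ≤
        NNfun (-(⟨fun _ => 1, isCb_const 1⟩ : CbSubmodule)) := hle _
    have e2 : NNfun (-(⟨fun _ => 1, isCb_const 1⟩ : CbSubmodule)) = -1 := by
      rw [NNfun]
      have hcoe : (-(⟨fun _ => 1, isCb_const 1⟩ : CbSubmodule)).1 =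
          fun t => -((fun _ => (1:ℝ)) t) := rfl
      rw [hcoe, cesaro_neg]
      simp only [cesaro_const]
      exact limsup_const _
    have h3 : Lhat (-(⟨fun _ => 1, isCb_const 1⟩ : CbSubmodule)) =
        -(Lhat ⟨fun _ => 1, isCb_const 1⟩) := map_neg _ _
    rw [e1] at h1; rw [e2, h3] at h2
    linarith
  shift_inv f hf s hs := by
    beta_reduce
    have hfs : IsCb (fun t => f (t + s)) := hf.shift hs
    rw [dif_pos hfs, dif_pos hf]
    obtain ⟨Mf, hMf0, hMf⟩ := hf.nonnegBound
    have hIf : ∀ b : ℝ, 0 ≤ b → IntervalIntegrable f volume 0 b := fun b hb =>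
      hf.intervalIntegrable le_rfl hb
    have hdiff : Tendsto (cesaro (fun t => f (t + s) - f t)) atTop (nhds 0) := by
      apply squeeze_zero_norm' (a := fun μ => (2 * Mf * s) / μ)
      · filter_upwards [eventually_gt_atTop 0] with μ hμ
        have e1 : ∫ t in (0:ℝ)..μ, f (t + s) = ∫ t in s..(μ + s), f t := by
          simpa using intervalIntegral.integral_comp_add_right (a := 0) (b := μ) (f := f) s
        have e2 : ∫ t in (0:ℝ)..μ, (f (t + s) - f t) =
            (∫ t in s..(μ + s), f t) - ∫ t in (0:ℝ)..μ, f t := by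
          rw [intervalIntegral.integral_sub (hfs.intervalIntegrable le_rfl hμ.le)
            (hIf μ hμ.le), e1]
        have e3 : ∫ t in s..(μ + s), f t =
            (∫ t in (0:ℝ)..(μ + s), f t) - ∫ t in (0:ℝ)..s, f t :=
          (intervalIntegral.integral_interval_sub_left (hIf (μ + s) (by linarith))
            (hIf s hs)).symm
        have e4 : (∫ t in (0:ℝ)..(μ + s), f t) - ∫ t in (0:ℝ)..μ, f t =
            ∫ t in μ..(μ + s), f t :=
          intervalIntegral.integral_interval_sub_left (hIf (μ + s) (by linarith)) (hIf μ hμ.le)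
        have e5 : cesaro (fun t => f (t + s) - f t) μ =
            ((∫ t in μ..(μ + s), f t) - ∫ t in (0:ℝ)..s, f t) / μ := by
          rw [cesaro, if_neg (ne_of_gt hμ), e2, e3, ← e4]
          ring_nf
        have b1 : |∫ t in μ..(μ + s), f t| ≤ Mf * s := by
          have h := intervalIntegral.norm_integral_le_of_norm_le_const (a := μ) (b := μ + s)
            (C := Mf) (f := f) (fun t ht => by
              rw [uIoc_of_le (by linarith : μ ≤ μ + s)] at ht
              exact hMf t (le_of_lt (lt_trans hμ ht.1)))
          rw [Real.norm_eq_abs] at h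
          calc |∫ t in μ..(μ + s), f t| ≤ Mf * |μ + s - μ| := h
            _ = Mf * s := by rw [add_sub_cancel_left, abs_of_nonneg hs]
        have b2 : |∫ t in (0:ℝ)..s, f t| ≤ Mf * s := by
          have h := intervalIntegral.norm_integral_le_of_norm_le_const (a := 0) (b := s)
            (C := Mf) (f := f) (fun t ht => by
              rw [uIoc_of_le hs] at ht
              exact hMf t (le_of_lt ht.1))
          rw [Real.norm_eq_abs] at h
          calc |∫ t in (0:ℝ)..s, f t| ≤ Mf * |s - 0| := h
            _ = Mf * s := by rw [sub_zero, abs_of_nonneg hs]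
        rw [Real.norm_eq_abs, e5, abs_div, abs_of_pos hμ, div_le_div_iff₀ hμ hμ]
        have := abs_sub (∫ t in μ..(μ + s), f t) (∫ t in (0:ℝ)..s, f t)
        nlinarith [abs_sub_abs_le_abs_sub (∫ t in μ..(μ + s), f t) (∫ t in (0:ℝ)..s, f t),
          abs_sub_le_iff.1 (le_refl |(∫ t in μ..(μ + s), f t) - ∫ t in (0:ℝ)..s, f t|)]
      · exact Tendsto.div_atTop tendsto_const_nhds tendsto_id
    set v : CbSubmodule := (⟨f, hf⟩ : CbSubmodule)
    set w : CbSubmodule := (⟨fun t => f (t + s), hfs⟩ : CbSubmodule)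
    have hd1 : Lhat (w - v) ≤ 0 := by
      have h := hle (w - v)
      have hval : NNfun (w - v) = limsup (cesaro (fun t => f (t + s) - f t)) atTop := rfl
      rw [hval, hdiff.limsup_eq] at h
      exact h
    have hd2 : Lhat (v - w) ≤ 0 := by
      have h := hle (v - w)
      have hval : NNfun (v - w) = limsup (cesaro (fun t => -(f (t + s) - f t))) atTop := by
        have : ((v - w : CbSubmodule) : ℝ → ℝ) = fun t => -(f (t + s) - f t) := by
          funext t
          show f t - f (t + s) = -(f (t + s) - f t)
          ring
        rw [NNfun, this]
      rw [hval, cesaro_neg, (hdiff.neg.congr (by intro μ; rfl)).limsup_eq] at h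
      simpa using h
    have h5 : Lhat (w - v) = Lhat w - Lhat v := map_sub _ _ _
    have h6 : Lhat (v - w) = Lhat v - Lhat w := map_sub _ _ _
    rw [h5] at hd1; rw [h6] at hd2
    have : Lhat w = Lhat v := by linarith
    exact this

lemma exists_BL {g : ℝ → ℝ} (hg : IsCb g) (r : ℝ)
    (hr : r = liminf (cesaro g) atTop ∨ r = limsup (cesaro g) atTop) :
    ∃ L : BanachLimitR, L.toFun g = r := by
  classical
  obtain ⟨Mg, hMg0, hMg⟩ := hg.nonnegBound
  have hb := cesaro_bound hMg
  have hba : IsBoundedUnder (· ≤ ·) atTop (cesaro g) := bddAbove_of_abs hb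
  have hbb : IsBoundedUnder (· ≥ ·) atTop (cesaro g) := bddBelow_of_abs hb
  -- general facts about NNfun
  have cesbnd : ∀ w : CbSubmodule, ∀ᶠ μ in atTop, |cesaro w.1 μ| ≤
      Classical.choose w.2.nonnegBound := by
    intro w
    filter_upwards [eventually_gt_atTop 0] with μ hμ
    exact cesaro_bound (Classical.choose_spec w.2.nonnegBound).2 μ hμ
  have wba : ∀ w : CbSubmodule, IsBoundedUnder (· ≤ ·) atTop (cesaro w.1) := by
    intro w
    obtain ⟨M, hM0, hM⟩ := (w.2 : IsCb w.1).nonnegBound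
    exact bddAbove_of_abs (cesaro_bound hM)
  have wbb : ∀ w : CbSubmodule, IsBoundedUnder (· ≥ ·) atTop (cesaro w.1) := by
    intro w
    obtain ⟨M, hM0, hM⟩ := (w.2 : IsCb w.1).nonnegBound
    exact bddBelow_of_abs (cesaro_bound hM)
  have N_hom : ∀ c : ℝ, 0 < c → ∀ w : CbSubmodule, NNfun (c • w) = c * NNfun w := by
    intro c hc w
    have hval : ((c • w : CbSubmodule) : ℝ → ℝ) = fun t => c * w.1 t := rfl
    have hsm : cesaro ((c • w : CbSubmodule) : ℝ → ℝ) = fun μ => c * cesaro w.1 μ := by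
      rw [hval, cesaro_smul]
    rw [NNfun, NNfun, hsm]
    exact limsup_const_mul_pos hc (wba w) (wbb w)
      (by
        obtain ⟨M, hM0, hM⟩ := (w.2 : IsCb w.1).nonnegBound
        apply bddAbove_of_abs (M := c * M)
        intro μ hμ
        rw [abs_mul, abs_of_pos hc]
        exact mul_le_mul_of_nonneg_left (cesaro_bound hM μ hμ) hc.le)
      (by
        obtain ⟨M, hM0, hM⟩ := (w.2 : IsCb w.1).nonnegBound
        apply bddBelow_of_abs (M := c * M)
        intro μ hμ
        rw [abs_mul, abs_of_pos hc]
        exact mul_le_mul_of_nonneg_left (cesaro_bound hM μ hμ) hc.le)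
  have N_add : ∀ w₁ w₂ : CbSubmodule, NNfun (w₁ + w₂) ≤ NNfun w₁ + NNfun w₂ := by
    intro w₁ w₂
    have hcongr : NNfun (w₁ + w₂) = limsup (cesaro w₁.1 + cesaro w₂.1) atTop := by
      apply limsup_congr
      filter_upwards [eventually_gt_atTop 0] with μ hμ
      have : ((w₁ + w₂ : CbSubmodule) : ℝ → ℝ) = fun t => w₁.1 t + w₂.1 t := rfl
      rw [this, cesaro_add w₁.2 w₂.2 hμ]
      rfl
    rw [NNfun] at hcongr
    rw [NNfun, NNfun, hcongr]
    exact limsup_add_le (wbb w₁) (wba w₁) (IsBoundedUnder.isCoboundedUnder_le (wbb w₂)) (wba w₂)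
  by_cases hg0 : g = fun _ => (0:ℝ)
  · -- g is zero; r = 0 and any Banach limit works
    have hr0 : r = 0 := by
      have hcz : cesaro g = fun _ => (0:ℝ) := by rw [hg0, cesaro_const]
      rcases hr with h | h <;> rw [h, hcz]
      · exact liminf_const 0
      · exact limsup_const 0
    set e1 : CbSubmodule := ⟨fun _ => 1, isCb_const 1⟩ with he1
    have he10 : e1 ≠ 0 := by
      intro h
      have := congrFun (congrArg Subtype.val h) 0
      simp [he1] at this
    set F : (CbSubmodule : Type) →ₗ.[ℝ] ℝ := LinearPMap.mkSpanSingleton e1 1 he10 with hF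
    have hf : ∀ v : F.domain, F v ≤ NNfun v.1 := by
      intro v
      have hv2 : (v : CbSubmodule) ∈ Submodule.span ℝ {e1} := v.2
      obtain ⟨c, hc⟩ := Submodule.mem_span_singleton.1 hv2
      have hvv : v = ⟨c • e1, by rw [hc]; exact v.2⟩ := Subtype.ext hc.symm
      rw [hvv]
      have happ : F ⟨c • e1, by rw [hc]; exact v.2⟩ = c • (1:ℝ) :=
        LinearPMap.mkSpanSingleton'_apply _ _ _ c _
      rw [happ]
      show c • (1:ℝ) ≤ NNfun (c • e1)
      have hval : (c • e1 : CbSubmodule).1 = fun t => c * 1 := rfl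
      have hNc : NNfun (c • e1) = c := by
        rw [NNfun, hval]
        have : (fun t : ℝ => c * 1) = fun _ : ℝ => c := by funext t; ring
        rw [this, cesaro_const, limsup_const]
      rw [hNc]
      simp
    obtain ⟨Lhat, hext, hle⟩ := exists_extension_of_le_sublinear F NNfun N_hom
      (fun w₁ w₂ => N_add w₁ w₂) hf
    refine ⟨mkBL Lhat hle, ?_⟩
    show @dite _ (IsCb g) (Classical.propDecidable _) (fun h => Lhat ⟨g, h⟩)
      (fun _ => (0:ℝ)) = r
    rw [dif_pos hg]
    have : (⟨g, hg⟩ : CbSubmodule) = 0 := Subtype.ext hg0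
    rw [this, map_zero, hr0]
  · -- g nonzero
    set base : CbSubmodule := ⟨g, hg⟩ with hbase
    have hbase0 : base ≠ 0 := by
      intro h
      exact hg0 (congrArg Subtype.val h)
    set F : (CbSubmodule : Type) →ₗ.[ℝ] ℝ := LinearPMap.mkSpanSingleton base r hbase0 with hF
    have hliminf_le : liminf (cesaro g) atTop ≤ r := by
      rcases hr with h | h
      · rw [h]
      · rw [h]; exact liminf_le_limsup hba hbb
    have hr_le : r ≤ limsup (cesaro g) atTop := by
      rcases hr with h | h
      · rw [h]; exact liminf_le_limsup hba hbb
      · rw [h]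
    have hf : ∀ v : F.domain, F v ≤ NNfun v.1 := by
      intro v
      have hv2 : (v : CbSubmodule) ∈ Submodule.span ℝ {base} := v.2
      obtain ⟨c, hc⟩ := Submodule.mem_span_singleton.1 hv2
      have hvv : v = ⟨c • base, by rw [hc]; exact v.2⟩ := Subtype.ext hc.symm
      rw [hvv]
      have happ : F ⟨c • base, by rw [hc]; exact v.2⟩ = c • r :=
        LinearPMap.mkSpanSingleton'_apply _ _ _ c _
      rw [happ, smul_eq_mul]
      show c * r ≤ NNfun (c • base)
      have hval : (c • base : CbSubmodule).1 = fun t => c * g t := rfl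
      have hs : NNfun (c • base) = limsup (fun μ => c * cesaro g μ) atTop := by
        rw [NNfun, hval, cesaro_smul]
      rcases lt_trichotomy c 0 with hcneg | hc0 | hcpos
      · have h1 : c * liminf (cesaro g) atTop ≤ limsup (fun μ => c * cesaro g μ) atTop := by
          apply c_neg_liminf_le hcneg hba
          apply bddAbove_of_abs (M := -c * Mg)
          intro μ hμ
          rw [abs_mul, abs_of_neg hcneg]
          exact mul_le_mul_of_nonneg_left (hb μ hμ) (by linarith)
        have h2 : c * r ≤ c * liminf (cesaro g) atTop :=
          mul_le_mul_of_nonpos_left hliminf_le hcneg.le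
        rw [hs]
        linarith
      · subst hc0
        rw [hs]
        simp only [zero_mul]
        exact le_of_eq (limsup_const 0).symm
      · have h1 : limsup (fun μ => c * cesaro g μ) atTop = c * limsup (cesaro g) atTop := by
          apply limsup_const_mul_pos hcpos hba hbb
          · apply bddAbove_of_abs (M := c * Mg)
            intro μ hμ
            rw [abs_mul, abs_of_pos hcpos]
            exact mul_le_mul_of_nonneg_left (hb μ hμ) hcpos.le
          · apply bddBelow_of_abs (M := c * Mg)
            intro μ hμ
            rw [abs_mul, abs_of_pos hcpos]
            exact mul_le_mul_of_nonneg_left (hb μ hμ) hcpos.le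
        rw [hs, h1]
        exact mul_le_mul_of_nonneg_left hr_le hcpos.le
    obtain ⟨Lhat, hext, hle⟩ := exists_extension_of_le_sublinear F NNfun N_hom
      (fun w₁ w₂ => N_add w₁ w₂) hf
    refine ⟨mkBL Lhat hle, ?_⟩
    show @dite _ (IsCb g) (Classical.propDecidable _) (fun h => Lhat ⟨g, h⟩)
      (fun _ => (0:ℝ)) = r
    rw [dif_pos hg]
    have hmem : base ∈ F.domain := by
      rw [hF, LinearPMap.domain_mkSpanSingleton]
      exact Submodule.mem_span_singleton_self base
    have h1 := hext ⟨base, hmem⟩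
    have h2 : F ⟨base, hmem⟩ = r := by
      have := LinearPMap.mkSpanSingleton_apply ℝ ℝ (σ := RingHom.id ℝ) hbase0 r
      convert this using 2
    rw [h2] at h1
    exact h1

end BLConstruction


section BLEval

lemma BanachLimitR.const_eval (L : BanachLimitR) (c : ℝ) : L.toFun (fun _ => c) = c := by
  have h := L.map_smul c (fun _ => 1) (isCb_const 1)
  simp only [mul_one] at h
  rw [h, L.map_one, mul_one]

lemma BanachLimitR.mono (L : BanachLimitR) {f g : ℝ → ℝ} (hf : IsCb f) (hg : IsCb g)
    (h : ∀ t ∈ Ici (0:ℝ), f t ≤ g t) : L.toFun f ≤ L.toFun g := by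
  have hnf : IsCb (fun t => -1 * f t) := hf.constMul (-1)
  have hadd := L.map_add g (fun t => -1 * f t) hg hnf
  have hs := L.map_smul (-1) f hf
  have hpos := L.pos (fun t => g t + -1 * f t) (hg.add hnf)
    (fun t ht => by
      have := h t ht
      show 0 ≤ g t + -1 * f t
      linarith)
  rw [hadd, hs] at hpos
  linarith

lemma BanachLimitR.eval_tendsto (L : BanachLimitR) {g : ℝ → ℝ} {A : ℝ} (hg : IsCb g)
    (hA : Tendsto g atTop (nhds A)) : L.toFun g = A := by
  have key : ∀ ε > (0:ℝ), |L.toFun g - A| ≤ ε := by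
    intro ε hε
    obtain ⟨s₀, hs₀⟩ := (Metric.tendsto_atTop.1 hA) ε hε
    set s : ℝ := max s₀ 0 with hsdef
    have hs : 0 ≤ s := le_max_right _ _
    have hshift : IsCb (fun t => g (t + s)) := hg.shift hs
    have hbd : ∀ t ∈ Ici (0:ℝ), A - ε ≤ g (t + s) ∧ g (t + s) ≤ A + ε := by
      intro t ht
      simp only [mem_Ici] at ht
      have h1 := hs₀ (t + s) (by
        have : s₀ ≤ s := le_max_left _ _
        linarith)
      rw [Real.dist_eq] at h1
      constructor <;> [linarith [abs_lt.1 h1]; linarith [abs_lt.1 h1]]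
    have hup : L.toFun (fun t => g (t + s)) ≤ A + ε := by
      have := L.mono hshift (isCb_const (A + ε)) (fun t ht => (hbd t ht).2)
      rwa [L.const_eval] at this
    have hlo : A - ε ≤ L.toFun (fun t => g (t + s)) := by
      have := L.mono (isCb_const (A - ε)) hshift (fun t ht => (hbd t ht).1)
      rwa [L.const_eval] at this
    rw [L.shift_inv g hg s hs] at hup hlo
    rw [abs_le]
    constructor <;> linarith
  by_contra hne
  have habs : 0 < |L.toFun g - A| := abs_pos.2 (sub_ne_zero.2 hne)
  have := key (|L.toFun g - A| / 2) (by linarith)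
  linarith

end BLEval

section PsiPos

lemma psi_pos {ψ : ℝ → ℝ} (hψ : OmegaInf ψ) : ∀ u > (0:ℝ), 0 < ψ u := by
  intro u hu
  obtain ⟨hconc, hnn, _, htop⟩ := hψ
  obtain ⟨T, hT⟩ : ∃ T : ℝ, max (u + 1) 1 ≤ T ∧ 1 ≤ ψ T := by
    have h := (htop.eventually_ge_atTop 1).and (eventually_ge_atTop (max (u + 1) 1))
    obtain ⟨T, h1, h2⟩ := h.exists
    exact ⟨T, h2, h1⟩
  have hTu : u < T := by
    have := hT.1
    have h1 : u + 1 ≤ max (u + 1) 1 := le_max_left _ _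
    linarith
  have hT0 : (0:ℝ) ≤ T := by
    have := hT.1
    have h1 : (1:ℝ) ≤ max (u + 1) 1 := le_max_right _ _
    linarith
  set lam : ℝ := (T - u) / (T - u / 2) with hlam
  set mu : ℝ := (u - u / 2) / (T - u / 2) with hmu
  have hden : 0 < T - u / 2 := by linarith
  have hlam0 : 0 ≤ lam := div_nonneg (by linarith) hden.le
  have hmu0 : 0 < mu := div_pos (by linarith) hden
  have hsum : lam + mu = 1 := by
    rw [hlam, hmu, ← add_div, div_eq_one_iff_eq (ne_of_gt hden)]
    ring
  have hcomb : lam • (u / 2) + mu • T = u := by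
    rw [smul_eq_mul, smul_eq_mul, hlam, hmu, div_mul_eq_mul_div, div_mul_eq_mul_div,
      ← add_div, div_eq_iff (ne_of_gt hden)]
    ring
  have h := hconc.2 (mem_Ici.2 (by linarith : (0:ℝ) ≤ u / 2)) (mem_Ici.2 hT0) hlam0 hmu0.le hsum
  rw [hcomb] at h
  have h2 : 0 ≤ ψ (u / 2) := hnn _ (mem_Ici.2 (by linarith))
  have h3 : 1 ≤ ψ T := hT.2
  rw [smul_eq_mul, smul_eq_mul] at h
  have hf1 : 0 ≤ lam * ψ (u / 2) := mul_nonneg hlam0 h2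
  have hf2 : mu ≤ mu * ψ T := by nlinarith
  linarith

end PsiPos


section Hardy

lemma hardy_tauberian {g : ℝ → ℝ} {M K A : ℝ} (hK : 0 ≤ K)
    (hM : ∀ t > (0:ℝ), |g t| ≤ M)
    (hInt : ∀ μ : ℝ, 0 ≤ μ → IntervalIntegrable g volume 0 μ)
    (hT : ∀ t u : ℝ, 0 < t → t ≤ u → g t - g u ≤ K * (u - t) / t)
    (hC : Tendsto (cesaro g) atTop (nhds A)) :
    Tendsto g atTop (nhds A) := by
  rw [Metric.tendsto_atTop]
  intro ε hε
  set δ : ℝ := min (1/2) (ε / (4*K+4)) with hδdef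
  have hδpos : 0 < δ := lt_min (by norm_num) (by positivity)
  have hδle : δ ≤ 1/2 := min_le_left _ _
  have hδlt1 : δ < 1 := lt_of_le_of_lt hδle (by norm_num)
  have hKδ : K * δ ≤ ε/4 := by
    have h1 : δ ≤ ε / (4*K+4) := min_le_right _ _
    have h2 : K * δ ≤ K * (ε / (4*K+4)) := mul_le_mul_of_nonneg_left h1 hK
    have h4 : (0:ℝ) < 4*K+4 := by linarith
    have h3 : K * (ε / (4*K+4)) ≤ ε/4 := by
      rw [mul_div_assoc', div_le_div_iff₀ h4 (by norm_num : (0:ℝ) < 4)]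
      nlinarith
    linarith
  have hKδ' : K * δ / (1 - δ) ≤ ε/2 := by
    have h1δ : (1:ℝ)/2 ≤ 1 - δ := by linarith
    calc K * δ / (1 - δ) ≤ (ε/4) / (1/2) :=
          div_le_div₀ (by positivity) hKδ (by norm_num) h1δ
      _ = ε/2 := by ring
  -- tendsto of comparison functions
  have htop1 : Tendsto (fun t : ℝ => (1+δ)*t) atTop atTop :=
    Tendsto.const_mul_atTop (by linarith) tendsto_id
  have htop2 : Tendsto (fun t : ℝ => (1-δ)*t) atTop atTop :=
    Tendsto.const_mul_atTop (by linarith) tendsto_id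
  have hup : Tendsto (fun t => ((1+δ) * cesaro g ((1+δ)*t) - cesaro g t)/δ + K*δ)
      atTop (nhds (A + K*δ)) := by
    have h1 : Tendsto (fun t => cesaro g ((1+δ)*t)) atTop (nhds A) := hC.comp htop1
    have h2 := (((h1.const_mul (1+δ)).sub hC).div_const δ).add_const (K*δ)
    have h3 : ((1+δ) * A - A)/δ + K*δ = A + K*δ := by
      field_simp
      ring
    convert h2 using 2
    linarith [h3]
  have hlow : Tendsto (fun t => (cesaro g t - (1-δ) * cesaro g ((1-δ)*t))/δ - K*δ/(1-δ))
      atTop (nhds (A - K*δ/(1-δ))) := by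
    have h1 : Tendsto (fun t => cesaro g ((1-δ)*t)) atTop (nhds A) := hC.comp htop2
    have h2 := ((hC.sub (h1.const_mul (1-δ))).div_const δ).sub_const (K*δ/(1-δ))
    have h3 : (A - (1-δ) * A)/δ - K*δ/(1-δ) = A - K*δ/(1-δ) := by
      rw [sub_left_inj]
      field_simp
      ring
    convert h2 using 2
    linarith [h3]
  have hupev : ∀ᶠ t in atTop, ((1+δ) * cesaro g ((1+δ)*t) - cesaro g t)/δ + K*δ ≤ A + ε/2 :=
    hup.eventually_le_const (by linarith)
  have hlowev : ∀ᶠ t in atTop,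
      A - (3/4)*ε ≤ (cesaro g t - (1-δ) * cesaro g ((1-δ)*t))/δ - K*δ/(1-δ) :=
    hlow.eventually_const_le (by linarith)
  -- pointwise comparison, upper
  have hcomp_up : ∀ t > (0:ℝ), g t ≤ ((1+δ) * cesaro g ((1+δ)*t) - cesaro g t)/δ + K*δ := by
    intro t ht
    have hb : t ≤ (1+δ)*t := by nlinarith
    have hbpos : 0 < (1+δ)*t := by nlinarith
    have hIab : IntervalIntegrable g volume t ((1+δ)*t) := by
      apply (hInt ((1+δ)*t) hbpos.le).mono_set
      rw [uIcc_of_le hb, uIcc_of_le hbpos.le]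
      exact Icc_subset_Icc ht.le le_rfl
    have hmono := intervalIntegral.integral_mono_on hb
      (intervalIntegrable_const (c := g t - K*δ)) hIab
      (fun u hu => by
        have h5 := hT t u ht hu.1
        have h6 : K * (u - t) / t ≤ K * δ := by
          rw [div_le_iff₀ ht]
          have : u - t ≤ δ * t := by nlinarith [hu.2]
          nlinarith
        linarith)
    rw [intervalIntegral.integral_const, smul_eq_mul] at hmono
    -- ∫ t..(1+δ)t g = (1+δ)t * cesaro((1+δ)t) - t * cesaro(t)
    have hsplit : ∫ u in t..((1+δ)*t), g u =
        ((1+δ)*t) * cesaro g ((1+δ)*t) - t * cesaro g t := by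
      have h7 : ∫ u in t..((1+δ)*t), g u =
          (∫ u in (0:ℝ)..((1+δ)*t), g u) - ∫ u in (0:ℝ)..t, g u :=
        (intervalIntegral.integral_interval_sub_left (hInt _ hbpos.le) (hInt _ ht.le)).symm
      rw [h7, cesaro, cesaro, if_neg (ne_of_gt hbpos), if_neg (ne_of_gt ht),
        mul_div_cancel₀ _ (ne_of_gt hbpos), mul_div_cancel₀ _ (ne_of_gt ht)]
    rw [hsplit] at hmono
    have hδt : 0 < δ * t := by positivity
    rw [← sub_le_iff_le_add, le_div_iff₀ hδpos]
    nlinarith [hmono, ht]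
  -- pointwise comparison, lower
  have hcomp_low : ∀ t > (0:ℝ),
      (cesaro g t - (1-δ) * cesaro g ((1-δ)*t))/δ - K*δ/(1-δ) ≤ g t := by
    intro t ht
    have ha : (1-δ)*t ≤ t := by nlinarith
    have hapos : 0 < (1-δ)*t := by nlinarith
    have hIab : IntervalIntegrable g volume ((1-δ)*t) t := by
      apply (hInt t ht.le).mono_set
      rw [uIcc_of_le ha, uIcc_of_le ht.le]
      exact Icc_subset_Icc hapos.le le_rfl
    have hmono := intervalIntegral.integral_mono_on ha hIab
      (intervalIntegrable_const (c := g t + K*δ/(1-δ)))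
      (fun u hu => by
        have hu0 : 0 < u := lt_of_lt_of_le hapos hu.1
        have h5 := hT u t hu0 hu.2
        have h6 : K * (t - u) / u ≤ K * δ / (1-δ) := by
          rw [div_le_div_iff₀ hu0 (by linarith : (0:ℝ) < 1-δ)]
          have e1 : t - u ≤ δ * t := by nlinarith [hu.1]
          have e2 : (1-δ)*t ≤ u := hu.1
          nlinarith [mul_nonneg hK (by linarith : (0:ℝ) ≤ 1 - δ), mul_nonneg hK hδpos.le]
        linarith)
    rw [intervalIntegral.integral_const, smul_eq_mul] at hmono
    have hsplit : ∫ u in ((1-δ)*t)..t, g u =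
        t * cesaro g t - ((1-δ)*t) * cesaro g ((1-δ)*t) := by
      have h7 : ∫ u in ((1-δ)*t)..t, g u =
          (∫ u in (0:ℝ)..t, g u) - ∫ u in (0:ℝ)..((1-δ)*t), g u :=
        (intervalIntegral.integral_interval_sub_left (hInt _ ht.le) (hInt _ hapos.le)).symm
      rw [h7, cesaro, cesaro, if_neg (ne_of_gt ht), if_neg (ne_of_gt hapos),
        mul_div_cancel₀ _ (ne_of_gt ht), mul_div_cancel₀ _ (ne_of_gt hapos)]
    rw [hsplit] at hmono
    rw [sub_le_iff_le_add, div_le_iff₀ hδpos]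
    nlinarith [hmono, ht]
  obtain ⟨N₁, h₁⟩ := eventually_atTop.1 (hupev.and hlowev)
  refine ⟨max N₁ 1, fun t ht => ?_⟩
  have ht1 : (1:ℝ) ≤ t := le_trans (le_max_right _ _) ht
  have ht0 : 0 < t := lt_of_lt_of_le one_pos ht1
  obtain ⟨hu1, hl1⟩ := h₁ t (le_trans (le_max_left _ _) ht)
  have hgu : g t ≤ A + ε/2 := le_trans (hcomp_up t ht0) hu1
  have hgl : A - (3/4)*ε ≤ g t := le_trans hl1 (hcomp_low t ht0)
  rw [Real.dist_eq, abs_lt]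
  constructor <;> linarith

end Hardy


section DecRearrFacts

lemma decRearr_nonneg (x : ℝ → ℝ) (t : ℝ) : 0 ≤ decRearr x t :=
  Real.sInf_nonneg (fun _ hs => hs.1)

lemma decRearr_set_mono (x : ℝ → ℝ) {t t' : ℝ} (h : t ≤ t') :
    {s : ℝ | 0 ≤ s ∧ volume {u : ℝ | 0 ≤ u ∧ s < |x u|} ≤ ENNReal.ofReal t} ⊆
      {s : ℝ | 0 ≤ s ∧ volume {u : ℝ | 0 ≤ u ∧ s < |x u|} ≤ ENNReal.ofReal t'} :=
  fun s hs => ⟨hs.1, le_trans hs.2 (ENNReal.ofReal_le_ofReal h)⟩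

lemma decRearr_anti (x : ℝ → ℝ) {a b : ℝ} (hab : a ≤ b)
    (hne : {s : ℝ | 0 ≤ s ∧ volume {u : ℝ | 0 ≤ u ∧ s < |x u|} ≤
      ENNReal.ofReal a}.Nonempty) :
    decRearr x b ≤ decRearr x a :=
  csInf_le_csInf ⟨0, fun s hs => hs.1⟩ hne (decRearr_set_mono x hab)

lemma integrable_decRearr_of_ne {x : ℝ → ℝ} {t₀ : ℝ} (ht₀ : 0 < t₀)
    (hΦ : (∫ s in (0:ℝ)..t₀, decRearr x s) ≠ 0) :
    ∀ b : ℝ, 0 ≤ b → IntervalIntegrable (decRearr x) volume 0 b := by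
  have hI0 : IntervalIntegrable (decRearr x) volume 0 t₀ := by
    by_contra h
    exact hΦ (intervalIntegral.integral_undef h)
  by_cases hT : ∀ s ∈ Ioc (0:ℝ) t₀,
      {s' : ℝ | 0 ≤ s' ∧ volume {u : ℝ | 0 ≤ u ∧ s' < |x u|} ≤ ENNReal.ofReal s} = ∅
  · exfalso
    apply hΦ
    rw [intervalIntegral.integral_of_le ht₀.le]
    rw [MeasureTheory.setIntegral_congr_fun measurableSet_Ioc
      (g := fun _ => (0:ℝ)) (fun s hs => by
        show decRearr x s = 0
        rw [decRearr, hT s hs, Real.sInf_empty])]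
    simp
  · push_neg at hT
    obtain ⟨s₁, hs₁, hS₁ne⟩ := hT
    have hS₁ : {s' : ℝ | 0 ≤ s' ∧ volume {u : ℝ | 0 ≤ u ∧ s' < |x u|} ≤
        ENNReal.ofReal s₁}.Nonempty := hS₁ne
    intro b hb
    rcases le_total b t₀ with h | h
    · exact hI0.mono_set (by
        rw [uIcc_of_le hb, uIcc_of_le ht₀.le]
        exact Icc_subset_Icc le_rfl h)
    · refine hI0.trans ?_
      have hanti : AntitoneOn (decRearr x) (uIcc t₀ b) := by
        rw [uIcc_of_le h]
        intro p hp q hq hpq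
        exact decRearr_anti x hpq (hS₁.mono (decRearr_set_mono x (le_trans hs₁.2 hp.1)))
      exact hanti.intervalIntegrable

lemma primitive_cont {x : ℝ → ℝ}
    (hIx : ∀ b : ℝ, 0 ≤ b → IntervalIntegrable (decRearr x) volume 0 b) :
    ContinuousOn (fun t => ∫ s in (0:ℝ)..t, decRearr x s) (Ici 0) := by
  set y : ℝ → ℝ := fun s => decRearr x (max s 0) with hy
  have hneg : ∀ a b : ℝ, a ≤ b → b ≤ 0 → IntervalIntegrable y volume a b := by
    intro a b hab hb0
    rw [intervalIntegrable_iff, uIoc_of_le hab]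
    refine IntegrableOn.congr_fun (f := fun _ => decRearr x 0) ?_ ?_ measurableSet_Ioc
    · exact integrableOn_const measure_Ioc_lt_top.ne
    · intro s hs
      show decRearr x 0 = decRearr x (max s 0)
      rw [max_eq_right (le_trans hs.2 hb0)]
  have hpos : ∀ a b : ℝ, 0 ≤ a → a ≤ b → IntervalIntegrable y volume a b := by
    intro a b ha0 hab
    rw [intervalIntegrable_iff, uIoc_of_le hab]
    refine IntegrableOn.congr_fun (f := decRearr x) ?_ ?_ measurableSet_Ioc
    · have h1 : IntervalIntegrable (decRearr x) volume a b :=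
        (hIx b (le_trans ha0 hab)).mono_set (by
          rw [uIcc_of_le hab, uIcc_of_le (le_trans ha0 hab)]
          exact Icc_subset_Icc ha0 le_rfl)
      rw [intervalIntegrable_iff, uIoc_of_le hab] at h1
      exact h1
    · intro s hs
      show decRearr x s = decRearr x (max s 0)
      rw [max_eq_left (le_trans ha0 hs.1.le)]
  have hyint : ∀ a b : ℝ, IntervalIntegrable y volume a b := by
    have hcase : ∀ a b : ℝ, a ≤ b → IntervalIntegrable y volume a b := by
      intro a b hab
      rcases le_total b 0 with hb0 | hb0
      · exact hneg a b hab hb0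
      · rcases le_total 0 a with ha0 | ha0
        · exact hpos a b ha0 hab
        · exact (hneg a 0 ha0 le_rfl).trans (hpos 0 b le_rfl hb0)
    intro a b
    rcases le_total a b with hab | hab
    · exact hcase a b hab
    · exact (hcase b a hab).symm
  have hconty := intervalIntegral.continuous_primitive hyint 0
  apply ContinuousOn.congr hconty.continuousOn
  intro t ht
  apply intervalIntegral.integral_congr
  intro s hs
  rw [uIcc_of_le (mem_Ici.1 ht)] at hs
  show decRearr x s = decRearr x (max s 0)
  rw [max_eq_left hs.1]

end DecRearrFacts


section MainCore

lemma main_core (ψ κ x : ℝ → ℝ) (hκ : MemK κ) (M' K : ℝ) (hK : 0 ≤ K)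
    (hb : ∀ t > (0:ℝ), |phiW ψ x (κ t)| ≤ M')
    (hInt : ∀ μ : ℝ, 0 ≤ μ → IntervalIntegrable (fun t => phiW ψ x (κ t)) volume 0 μ)
    (hTaub : ∀ t u : ℝ, 0 < t → t ≤ u →
      phiW ψ x (κ t) - phiW ψ x (κ u) ≤ K * (u - t) / t)
    (hGcb : IsCb (fun t => phiW ψ x (κ (max t 1)))) :
    ((∃ A : ℝ, Tendsto (cesaro fun t => phiW ψ x (κ t)) atTop (nhds A)) ↔
      ∀ L₁ L₂ : BanachLimitR, fL L₁ ψ κ x = fL L₂ ψ κ x) ∧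
    ((∀ L₁ L₂ : BanachLimitR, fL L₁ ψ κ x = fL L₂ ψ κ x) ↔
      ∃ A : ℝ, Tendsto (phiW ψ x) atTop (nhds A) ∧ ∀ L : BanachLimitR, fL L ψ κ x = A) ∧
    ((∀ L₁ L₂ : BanachLimitR, fL L₁ ψ κ x = fL L₂ ψ κ x) ↔
      ∃ A : ℝ, Tendsto (phiW ψ x) atTop (nhds A)) := by
  have E2 : ∀ A : ℝ, Tendsto (phiW ψ x) atTop (nhds A) →
      ∀ L : BanachLimitR, fL L ψ κ x = A := by
    intro A hA L
    have hmax : Tendsto (fun t : ℝ => max t 1) atTop atTop :=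
      tendsto_atTop_mono (fun t => le_max_left t 1) tendsto_id
    have hGtend : Tendsto (fun t => phiW ψ x (κ (max t 1))) atTop (nhds A) :=
      hA.comp (hκ.2.2.2.2.2.comp hmax)
    exact L.eval_tendsto hGcb hGtend
  have E1 : (∃ A : ℝ, Tendsto (cesaro fun t => phiW ψ x (κ t)) atTop (nhds A)) →
      ∃ A : ℝ, Tendsto (phiW ψ x) atTop (nhds A) := by
    rintro ⟨A, hA⟩
    have hg1A : Tendsto (fun t => phiW ψ x (κ t)) atTop (nhds A) :=
      hardy_tauberian hK hb hInt hTaub hA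
    refine ⟨A, ?_⟩
    rw [Metric.tendsto_atTop] at hg1A ⊢
    intro ε hε
    obtain ⟨T, hT⟩ := hg1A ε hε
    refine ⟨κ (max T 0), fun s hs => ?_⟩
    have hs0 : 0 ≤ s := le_trans (hκ.2.2.1 (mem_Ici.2 (le_max_right T 0))) hs
    obtain ⟨t, ht, hts⟩ := hκ.2.2.2.1 (mem_Ici.2 hs0)
    have htT : max T 0 ≤ t := by
      by_contra hlt
      push_neg at hlt
      have hlt2 : κ t < κ (max T 0) :=
        hκ.1 ht (mem_Ici.2 (le_max_right T 0)) hlt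
      rw [hts] at hlt2
      linarith
    have h := hT t (le_trans (le_max_left T 0) htT)
    rw [hts] at h
    exact h
  have E3 : (∀ L₁ L₂ : BanachLimitR, fL L₁ ψ κ x = fL L₂ ψ κ x) →
      ∃ A : ℝ, Tendsto (cesaro fun t => phiW ψ x (κ t)) atTop (nhds A) := by
    intro hii
    obtain ⟨MG, hMG0, hMG⟩ := hGcb.nonnegBound
    have hbG := cesaro_bound hMG
    have hba := bddAbove_of_abs hbG
    have hbb := bddBelow_of_abs hbG
    obtain ⟨L₁, hL₁⟩ := exists_BL hGcb
      (liminf (cesaro fun t => phiW ψ x (κ (max t 1))) atTop) (Or.inl rfl)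
    obtain ⟨L₂, hL₂⟩ := exists_BL hGcb
      (limsup (cesaro fun t => phiW ψ x (κ (max t 1))) atTop) (Or.inr rfl)
    have h12 : L₁.toFun (fun t => phiW ψ x (κ (max t 1))) =
        L₂.toFun (fun t => phiW ψ x (κ (max t 1))) := hii L₁ L₂
    rw [hL₁, hL₂] at h12
    have hTend : Tendsto (cesaro fun t => phiW ψ x (κ (max t 1))) atTop
        (nhds (limsup (cesaro fun t => phiW ψ x (κ (max t 1))) atTop)) :=
      tendsto_of_le_liminf_of_limsup_le (le_of_eq h12.symm) le_rfl hba hbb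
    -- transfer from the truncated function to the original one
    have hintG : ∀ μ : ℝ, 0 ≤ μ →
        IntervalIntegrable (fun t => phiW ψ x (κ (max t 1))) volume 0 μ :=
      fun μ hμ => hGcb.intervalIntegrable le_rfl hμ
    set c0 : ℝ := ∫ s in (0:ℝ)..1,
      (phiW ψ x (κ s) - phiW ψ x (κ (max s 1))) with hc0
    have hkey : ∀ μ : ℝ, 1 ≤ μ → cesaro (fun t => phiW ψ x (κ t)) μ =
        cesaro (fun t => phiW ψ x (κ (max t 1))) μ + c0 / μ := by
      intro μ hμ1
      have hμ0 : 0 < μ := lt_of_lt_of_le one_pos hμ1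
      have hi01 : IntervalIntegrable (fun t => phiW ψ x (κ t)) volume 0 1 :=
        hInt 1 zero_le_one
      have hsub : uIcc (1:ℝ) μ ⊆ uIcc (0:ℝ) μ := by
        rw [uIcc_of_le hμ1, uIcc_of_le hμ0.le]
        exact Icc_subset_Icc (by norm_num) le_rfl
      have hi1μ : IntervalIntegrable (fun t => phiW ψ x (κ t)) volume 1 μ :=
        (hInt μ hμ0.le).mono_set hsub
      have hiG01 : IntervalIntegrable (fun t => phiW ψ x (κ (max t 1))) volume 0 1 :=
        hintG 1 zero_le_one
      have hiG1μ : IntervalIntegrable (fun t => phiW ψ x (κ (max t 1))) volume 1 μ :=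
        (hintG μ hμ0.le).mono_set hsub
      have e1 : (∫ t in (0:ℝ)..μ, phiW ψ x (κ t)) =
          (∫ t in (0:ℝ)..1, phiW ψ x (κ t)) + ∫ t in (1:ℝ)..μ, phiW ψ x (κ t) :=
        (intervalIntegral.integral_add_adjacent_intervals hi01 hi1μ).symm
      have e2 : (∫ t in (0:ℝ)..μ, phiW ψ x (κ (max t 1))) =
          (∫ t in (0:ℝ)..1, phiW ψ x (κ (max t 1))) +
            ∫ t in (1:ℝ)..μ, phiW ψ x (κ (max t 1)) :=
        (intervalIntegral.integral_add_adjacent_intervals hiG01 hiG1μ).symm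
      have e3 : (∫ t in (1:ℝ)..μ, phiW ψ x (κ t)) =
          ∫ t in (1:ℝ)..μ, phiW ψ x (κ (max t 1)) := by
        apply intervalIntegral.integral_congr
        intro s hs
        rw [uIcc_of_le hμ1] at hs
        show phiW ψ x (κ s) = phiW ψ x (κ (max s 1))
        rw [max_eq_left hs.1]
      have e4 : c0 = (∫ t in (0:ℝ)..1, phiW ψ x (κ t)) -
          ∫ t in (0:ℝ)..1, phiW ψ x (κ (max t 1)) := by
        rw [hc0]
        exact intervalIntegral.integral_sub hi01 hiG01
      rw [cesaro, cesaro, if_neg (ne_of_gt hμ0), if_neg (ne_of_gt hμ0), e1, e2, e3, e4]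
      field_simp
      ring
    refine ⟨limsup (cesaro fun t => phiW ψ x (κ (max t 1))) atTop, ?_⟩
    have h0 := hTend.add (Tendsto.div_atTop (tendsto_const_nhds (x := c0)) tendsto_id)
    rw [add_zero] at h0
    apply h0.congr'
    filter_upwards [eventually_ge_atTop 1] with μ hμ
    exact (hkey μ hμ).symm
  have impl2 : (∃ A : ℝ, Tendsto (phiW ψ x) atTop (nhds A)) →
      ∀ L₁ L₂ : BanachLimitR, fL L₁ ψ κ x = fL L₂ ψ κ x := by
    rintro ⟨A, hA⟩ L₁ L₂
    rw [E2 A hA L₁, E2 A hA L₂]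
  have impl1 : (∀ L₁ L₂ : BanachLimitR, fL L₁ ψ κ x = fL L₂ ψ κ x) →
      ∃ A : ℝ, Tendsto (phiW ψ x) atTop (nhds A) := fun h => E1 (E3 h)
  refine ⟨⟨fun h => impl2 (E1 h), E3⟩, ⟨?_, ?_⟩, ⟨impl1, impl2⟩⟩
  · intro h
    obtain ⟨A, hA⟩ := impl1 h
    exact ⟨A, hA, E2 A hA⟩
  · rintro ⟨A, hA, hall⟩ L₁ L₂
    rw [hall L₁, hall L₂]

end MainCore

end AuxKMT

/-- for `κ ∈ D(ψ)` and `x ∈ M₊(ψ)`: Cesàro convergence of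
`φ_κ(x)`, independence of `f_{L,κ}(x)` of the Banach limit `L`, and existence of
`lim φ(x)` (with all `f_{L,κ}(x)` equal to that limit) are equivalent;
in particular `x` is `κ`-measurable iff it is Tauberian. -/
theorem kappa_measurable_iff_tauberian (ψ κ x : ℝ → ℝ) (hψ : OmegaInf ψ)
    (hκ : MemK κ) (hD : DominatedGrowth ψ κ) (hx : MemMplus ψ x) :
    ((∃ A : ℝ, Tendsto (cesaro fun t => phiW ψ x (κ t)) atTop (nhds A)) ↔
      ∀ L₁ L₂ : BanachLimitR, fL L₁ ψ κ x = fL L₂ ψ κ x) ∧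
    ((∀ L₁ L₂ : BanachLimitR, fL L₁ ψ κ x = fL L₂ ψ κ x) ↔
      ∃ A : ℝ, Tendsto (phiW ψ x) atTop (nhds A) ∧ ∀ L : BanachLimitR, fL L ψ κ x = A) ∧
    ((∀ L₁ L₂ : BanachLimitR, fL L₁ ψ κ x = fL L₂ ψ κ x) ↔
      ∃ A : ℝ, Tendsto (phiW ψ x) atTop (nhds A)) := by
  obtain ⟨M, hM⟩ := hx.1.2
  set M' : ℝ := max M 0 with hM'def
  have hκmono := hκ.1
  have hκ0 := hκ.2.1
  have hmaps := hκ.2.2.1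
  have hκpos : ∀ t > (0:ℝ), 0 < κ t := by
    intro t ht
    have h := hκmono self_mem_Ici (mem_Ici.2 ht.le) ht
    rwa [hκ0] at h
  have hψκpos : ∀ t > (0:ℝ), 0 < ψ (κ t) := fun t ht => psi_pos hψ _ (hκpos t ht)
  have hphinn : ∀ s : ℝ, 0 ≤ s → 0 ≤ phiW ψ x s := by
    intro s hs
    apply div_nonneg _ (hψ.2.1 s (mem_Ici.2 hs))
    exact intervalIntegral.integral_nonneg hs (fun u _ => decRearr_nonneg x u)
  have hb : ∀ t > (0:ℝ), |phiW ψ x (κ t)| ≤ M' := by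
    intro t ht
    rw [abs_le]
    constructor
    · have := hphinn (κ t) (hκpos t ht).le
      have h0 : (0:ℝ) ≤ M' := le_max_right M 0
      linarith
    · exact le_trans (hM (κ t) (hκpos t ht)) (le_max_left M 0)
  obtain ⟨C₀, hC₀pos, hC₀⟩ := hD.2
  set C : ℝ := max C₀ 1 with hCdef
  have hC1 : (1:ℝ) ≤ C := le_max_right C₀ 1
  have hCpos : (0:ℝ) < C := lt_of_lt_of_le one_pos hC1
  have hCineq : ∀ t > (0:ℝ), deriv (fun u => ψ (κ u)) t * t < C * ψ (κ t) := by
    intro t ht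
    have h := hC₀ t ht
    have h2 : deriv (fun u => ψ (κ u)) t / ψ (κ t) < C / t := by
      apply lt_of_lt_of_le h
      gcongr
      exact le_max_left C₀ 1
    rw [div_lt_div_iff₀ (hψκpos t ht) ht] at h2
    exact h2
  have hratio : ∀ t u : ℝ, 0 < t → t ≤ u → ψ (κ u) * t ^ C ≤ ψ (κ t) * u ^ C := by
    intro t u ht htu
    have hu : 0 < u := lt_of_lt_of_le ht htu
    have hF : AntitoneOn (fun s => ψ (κ s) / s ^ C) (Icc t u) := by
      have hsub : Icc t u ⊆ Ioi (0:ℝ) := fun s hs => lt_of_lt_of_le ht hs.1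
      apply antitoneOn_of_deriv_nonpos (convex_Icc t u)
      · intro s hs
        have hs0 : 0 < s := hsub hs
        exact ((hD.1 s hs0).continuousAt.continuousWithinAt).div
          ((Real.continuousAt_rpow_const s C (Or.inl (ne_of_gt hs0))).continuousWithinAt)
          (Real.rpow_pos_of_pos hs0 C).ne'
      · intro s hs
        rw [interior_Icc] at hs
        have hs0 : 0 < s := lt_trans ht hs.1
        exact ((hD.1 s hs0).div
          (Real.hasDerivAt_rpow_const (p := C) (Or.inl (ne_of_gt hs0))).differentiableAt
          (Real.rpow_pos_of_pos hs0 C).ne').differentiableWithinAt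
      · intro s hs
        rw [interior_Icc] at hs
        have hs0 : 0 < s := lt_trans ht hs.1
        have hd1 : HasDerivAt (fun u => ψ (κ u)) (deriv (fun u => ψ (κ u)) s) s :=
          (hD.1 s hs0).hasDerivAt
        have hd2 : HasDerivAt (fun s : ℝ => s ^ C) (C * s ^ (C - 1)) s :=
          Real.hasDerivAt_rpow_const (Or.inl (ne_of_gt hs0))
        have hder := hd1.div hd2 (Real.rpow_pos_of_pos hs0 C).ne'
        rw [HasDerivAt.deriv (f := fun s => ψ (κ s) / s ^ C) hder]
        apply div_nonpos_of_nonpos_of_nonneg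
        · have hkey := hCineq s hs0
          have hpow : s ^ C = s ^ (C - 1) * s := by
            rw [← Real.rpow_add_one (ne_of_gt hs0) (C - 1)]
            norm_num
          have hp1 : (0:ℝ) ≤ s ^ (C - 1) := (Real.rpow_pos_of_pos hs0 _).le
          have hnum : deriv (fun u => ψ (κ u)) s * s ^ C ≤ ψ (κ s) * (C * s ^ (C - 1)) := by
            rw [hpow]
            calc deriv (fun u => ψ (κ u)) s * (s ^ (C - 1) * s)
                = (deriv (fun u => ψ (κ u)) s * s) * s ^ (C - 1) := by ring
              _ ≤ (C * ψ (κ s)) * s ^ (C - 1) := mul_le_mul_of_nonneg_right hkey.le hp1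
              _ = ψ (κ s) * (C * s ^ (C - 1)) := by ring
          linarith
        · positivity
    have h := hF (left_mem_Icc.2 htu) (right_mem_Icc.2 htu) htu
    rw [div_le_div_iff₀ (Real.rpow_pos_of_pos hu C) (Real.rpow_pos_of_pos ht C)] at h
    exact h
  by_cases hcase : ∀ t > (0:ℝ), (∫ s in (0:ℝ)..t, decRearr x s) = 0
  · -- degenerate case: phiW vanishes on [0, ∞)
    have hphi0 : ∀ t : ℝ, 0 ≤ t → phiW ψ x t = 0 := by
      intro t ht
      rcases eq_or_lt_of_le ht with h | h
      · rw [phiW, ← h]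
        simp
      · rw [phiW, hcase t h, zero_div]
    have hInt0 : ∀ μ : ℝ, 0 ≤ μ →
        IntervalIntegrable (fun t => phiW ψ x (κ t)) volume 0 μ := by
      intro μ hμ
      rw [intervalIntegrable_iff, uIoc_of_le hμ]
      refine IntegrableOn.congr_fun (f := fun _ => (0:ℝ)) ?_ ?_ measurableSet_Ioc
      · exact integrableOn_const measure_Ioc_lt_top.ne
      · intro s hs
        exact (hphi0 (κ s) (hmaps (mem_Ici.2 hs.1.le))).symm
    have hTaub0 : ∀ t u : ℝ, 0 < t → t ≤ u →
        phiW ψ x (κ t) - phiW ψ x (κ u) ≤ 0 * (u - t) / t := by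
      intro t u ht htu
      rw [hphi0 (κ t) (hmaps (mem_Ici.2 ht.le)),
        hphi0 (κ u) (hmaps (mem_Ici.2 (by linarith)))]
      simp
    have hGcb0 : IsCb (fun t => phiW ψ x (κ (max t 1))) := by
      have heq : (fun t => phiW ψ x (κ (max t 1))) = fun _ => (0:ℝ) := by
        funext t
        exact hphi0 (κ (max t 1)) (hmaps (mem_Ici.2 (le_trans zero_le_one (le_max_right t 1))))
      rw [heq]
      exact isCb_const 0
    exact main_core ψ κ x hκ M' 0 le_rfl hb hInt0 hTaub0 hGcb0
  · push_neg at hcase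
    obtain ⟨t₀, ht₀, hΦ0⟩ := hcase
    have hIx := integrable_decRearr_of_ne ht₀ hΦ0
    have hΦc := primitive_cont hIx
    have hκcont : ContinuousOn κ (Ici 0) := hκ.2.2.2.2.1.continuousOn
    have hg1cont : ContinuousOn (fun t => phiW ψ x (κ t)) (Ioi 0) := by
      have hnum : ContinuousOn (fun t => ∫ s in (0:ℝ)..κ t, decRearr x s) (Ioi 0) :=
        hΦc.comp (hκcont.mono (Ioi_subset_Ici le_rfl))
          (fun s hs => mem_Ici.2 (hκpos s (mem_Ioi.1 hs)).le)
      have hden : ContinuousOn (fun t => ψ (κ t)) (Ioi 0) :=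
        fun t ht => ((hD.1 t (mem_Ioi.1 ht)).continuousAt).continuousWithinAt
      exact hnum.div hden (fun t ht => (hψκpos t (mem_Ioi.1 ht)).ne')
    have hInt1 : ∀ μ : ℝ, 0 ≤ μ →
        IntervalIntegrable (fun t => phiW ψ x (κ t)) volume 0 μ := by
      intro μ hμ
      rw [intervalIntegrable_iff, uIoc_of_le hμ]
      haveI : IsFiniteMeasure (volume.restrict (Ioc (0:ℝ) μ)) :=
        ⟨by rw [Measure.restrict_apply_univ]; exact measure_Ioc_lt_top⟩
      refine ⟨(hg1cont.mono Ioc_subset_Ioi_self).aestronglyMeasurable measurableSet_Ioc, ?_⟩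
      apply MeasureTheory.HasFiniteIntegral.of_bounded (C := M')
      refine (ae_restrict_iff' measurableSet_Ioc).2 (Eventually.of_forall fun s hs => ?_)
      rw [Real.norm_eq_abs]
      exact hb s hs.1
    have hGcb : IsCb (fun t => phiW ψ x (κ (max t 1))) := by
      constructor
      · exact hg1cont.comp ((continuous_id.max continuous_const).continuousOn)
          (fun t _ => mem_Ioi.2 (lt_of_lt_of_le one_pos (le_max_right t 1)))
      · exact ⟨M', fun t _ => hb (max t 1) (lt_of_lt_of_le one_pos (le_max_right t 1))⟩
    have hTaub : ∀ t u : ℝ, 0 < t → t ≤ u →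
        phiW ψ x (κ t) - phiW ψ x (κ u) ≤ M' * C * (u - t) / t := by
      intro t u ht htu
      have hu : 0 < u := lt_of_lt_of_le ht htu
      have hκt := hκpos t ht
      have hκu := hκpos u hu
      have hψa := hψκpos t ht
      have hψb := hψκpos u hu
      have hκle : κ t ≤ κ u := by
        rcases eq_or_lt_of_le htu with h | h
        · rw [h]
        · exact (hκmono (mem_Ici.2 ht.le) (mem_Ici.2 hu.le) h).le
      have hΦmono : (∫ s in (0:ℝ)..κ t, decRearr x s) ≤
          ∫ s in (0:ℝ)..κ u, decRearr x s := by
        have e := intervalIntegral.integral_interval_sub_left (hIx (κ u) hκu.le)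
          (hIx (κ t) hκt.le)
        have hnn : 0 ≤ ∫ s in κ t..κ u, decRearr x s :=
          intervalIntegral.integral_nonneg hκle (fun s _ => decRearr_nonneg x s)
        linarith
      have hΦann : 0 ≤ ∫ s in (0:ℝ)..κ t, decRearr x s :=
        intervalIntegral.integral_nonneg hκt.le (fun s _ => decRearr_nonneg x s)
      have hPM : (∫ s in (0:ℝ)..κ t, decRearr x s) / ψ (κ t) ≤ M' := by
        have h := hb t ht
        rw [abs_le] at h
        exact h.2
      have hP0 : 0 ≤ (∫ s in (0:ℝ)..κ t, decRearr x s) / ψ (κ t) :=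
        div_nonneg hΦann hψa.le
      have step1 : phiW ψ x (κ t) - phiW ψ x (κ u) ≤
          ((∫ s in (0:ℝ)..κ t, decRearr x s) / ψ (κ t)) * (1 - ψ (κ t) / ψ (κ u)) := by
        show (∫ s in (0:ℝ)..κ t, decRearr x s) / ψ (κ t) -
            (∫ s in (0:ℝ)..κ u, decRearr x s) / ψ (κ u) ≤ _
        have h1 : (∫ s in (0:ℝ)..κ t, decRearr x s) / ψ (κ u) ≤
            (∫ s in (0:ℝ)..κ u, decRearr x s) / ψ (κ u) := by gcongr
        have e : ((∫ s in (0:ℝ)..κ t, decRearr x s) / ψ (κ t)) * (ψ (κ t) / ψ (κ u)) =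
            (∫ s in (0:ℝ)..κ t, decRearr x s) / ψ (κ u) := by
          rw [div_mul_div_comm, mul_comm (∫ s in (0:ℝ)..κ t, decRearr x s) (ψ (κ t)),
            mul_div_mul_left _ _ (ne_of_gt hψa)]
        have e2 : ((∫ s in (0:ℝ)..κ t, decRearr x s) / ψ (κ t)) * (1 - ψ (κ t) / ψ (κ u)) =
            (∫ s in (0:ℝ)..κ t, decRearr x s) / ψ (κ t) -
              ((∫ s in (0:ℝ)..κ t, decRearr x s) / ψ (κ t)) * (ψ (κ t) / ψ (κ u)) := by
          ring
        linarith
      have hvpos : 0 < t / u := div_pos ht hu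
      have hvle1 : t / u ≤ 1 := (div_le_one hu).2 htu
      have hv : (t / u) ^ C ≤ ψ (κ t) / ψ (κ u) := by
        rw [Real.div_rpow ht.le hu.le, div_le_div_iff₀ (Real.rpow_pos_of_pos hu C) hψb]
        calc t ^ C * ψ (κ u) = ψ (κ u) * t ^ C := mul_comm _ _
          _ ≤ ψ (κ t) * u ^ C := hratio t u ht htu
      have hber : 1 - (t / u) ^ C ≤ C * (1 - t / u) := by
        have hs : -1 ≤ t / u - 1 := by linarith
        have hb2 := one_add_mul_self_le_rpow_one_add hs hC1
        have heq : (1 + (t / u - 1)) = t / u := by ring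
        rw [heq] at hb2
        linarith
      have h3 : C * (1 - t / u) ≤ C * (1 - t / u) / (t / u) := by
        rw [le_div_iff₀ hvpos]
        exact mul_le_of_le_one_right (mul_nonneg hCpos.le (by linarith)) hvle1
      have h4 : C * (1 - t / u) / (t / u) = C * (u - t) / t := by
        rw [div_eq_div_iff (ne_of_gt hvpos) (ne_of_gt ht)]
        field_simp
      have step2 : 1 - ψ (κ t) / ψ (κ u) ≤ C * (u - t) / t := by linarith
      have hfinal : ((∫ s in (0:ℝ)..κ t, decRearr x s) / ψ (κ t)) *
          (1 - ψ (κ t) / ψ (κ u)) ≤ M' * C * (u - t) / t := by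
        rcases le_or_gt (1 - ψ (κ t) / ψ (κ u)) 0 with hneg | hpos
        · have h5 := mul_nonpos_of_nonneg_of_nonpos hP0 hneg
          have h6 : 0 ≤ M' * C * (u - t) / t :=
            div_nonneg (mul_nonneg (mul_nonneg (le_max_right M 0) hCpos.le)
              (by linarith)) ht.le
          linarith
        · calc ((∫ s in (0:ℝ)..κ t, decRearr x s) / ψ (κ t)) *
              (1 - ψ (κ t) / ψ (κ u)) ≤ M' * (1 - ψ (κ t) / ψ (κ u)) :=
              mul_le_mul_of_nonneg_right hPM hpos.le
            _ ≤ M' * (C * (u - t) / t) := mul_le_mul_of_nonneg_left step2 (le_max_right M 0)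
            _ = M' * C * (u - t) / t := by ring
      linarith
    exact main_core ψ κ x hκ M' (M' * C)
      (mul_nonneg (le_max_right M 0) hCpos.le) hb hInt1 hTaub hGcb
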